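/- Let H be a Hopf algebra over k, B ⊆ A a cleft right H-extension with cleaving map j and convolution inverse j̃. Then for every a ∈ A the element Σ a⁰ j̃(a¹) is coinvariant, i.e. belongs to B. -/

import Mathlib

open TensorProduct

/-- A right `H`-comodule algebra structure on a `k`-algebra `A`: a coassociative counital
coaction `ρ : A → A ⊗ H` which is a morphism of algebras. -/
structure ComodAlg (k H A : Type*) [CommRing k] [Ring H] [Bialgebra k H]
    [Ring A] [Algebra k A] where
  ρ : A →ₗ[k] A ⊗[k] H
  coassoc : ∀ a : A,
    TensorProduct.assoc k A H H (TensorProduct.map ρ LinearMap.id (ρ a)) =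
      TensorProduct.map LinearMap.id Coalgebra.comul (ρ a)
  counit : ∀ a : A,
    TensorProduct.rid k A (TensorProduct.map LinearMap.id Coalgebra.counit (ρ a)) = a
  map_one : ρ 1 = 1
  map_mul : ∀ a b : A, ρ (a * b) = ρ a * ρ b

namespace ComodAlg

variable {k H A : Type*} [CommRing k] [Ring H] [Bialgebra k H] [Ring A] [Algebra k A]

/-- The subalgebra of coinvariants `B = {a : ρ(a) = a ⊗ 1}` of a comodule algebra. -/
def coinv (c : ComodAlg k H A) : Subalgebra k A where
  carrier := {a : A | c.ρ a = a ⊗ₜ[k] (1 : H)}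
  mul_mem' := by
    intro a b ha hb
    simp only [Set.mem_setOf_eq] at *
    rw [c.map_mul, ha, hb, Algebra.TensorProduct.tmul_mul_tmul, mul_one]
  one_mem' := by
    simp only [Set.mem_setOf_eq, c.map_one, Algebra.TensorProduct.one_def]
  add_mem' := by
    intro a b ha hb
    simp only [Set.mem_setOf_eq] at *
    rw [map_add, ha, hb, TensorProduct.add_tmul]
  algebraMap_mem' := by
    intro r
    simp only [Set.mem_setOf_eq, Algebra.algebraMap_eq_smul_one, map_smul, c.map_one,
      Algebra.TensorProduct.one_def, TensorProduct.smul_tmul']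

end ComodAlg

/-- The convolution product on `Hom_k(H, A)`. -/
noncomputable def conv {k H A : Type*} [CommRing k] [AddCommGroup H] [Module k H]
    [Coalgebra k H] [Ring A] [Algebra k A] (f g : H →ₗ[k] A) : H →ₗ[k] A :=
  LinearMap.mul' k A ∘ₗ TensorProduct.map f g ∘ₗ Coalgebra.comul

/-- The unit `η ∘ ε` of the convolution algebra. -/
noncomputable def convOne (k H A : Type*) [CommRing k] [AddCommGroup H] [Module k H]
    [Coalgebra k H] [Ring A] [Algebra k A] : H →ₗ[k] A :=
  Algebra.linearMap k A ∘ₗ Coalgebra.counit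

section aux
variable {k H M : Type*} [CommRing k] [AddCommGroup H] [Module k H] [Coalgebra k H]
  [Ring M] [Algebra k M]

theorem conv_repr (f g : H →ₗ[k] M) {h : H} {ι : Type*} (r : Coalgebra.Repr k h ι) :
    conv f g h = ∑ i ∈ r.index, f (r.left i) * g (r.right i) := by
  simp only [conv, LinearMap.comp_apply, ← r.eq, map_sum, TensorProduct.map_tmul,
    LinearMap.mul'_apply]

theorem convOne_apply (h : H) : convOne k H M h = algebraMap k M (Coalgebra.counit h) := rfl

theorem counit_smul_sum {h : H} {ι : Type*} (r : Coalgebra.Repr k h ι) :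
    ∑ i ∈ r.index, Coalgebra.counit (R := k) (r.left i) • r.right i = h := by
  calc ∑ i ∈ r.index, Coalgebra.counit (R := k) (r.left i) • r.right i
      = TensorProduct.lid k H (∑ i ∈ r.index,
          Coalgebra.counit (R := k) (r.left i) ⊗ₜ[k] r.right i) := by
        rw [map_sum]; simp [TensorProduct.lid_tmul]
    _ = TensorProduct.lid k H ((1 : k) ⊗ₜ[k] h) := by rw [Coalgebra.sum_counit_tmul_eq r]
    _ = h := by simp

theorem smul_counit_sum {h : H} {ι : Type*} (r : Coalgebra.Repr k h ι) :
    ∑ i ∈ r.index, Coalgebra.counit (R := k) (r.right i) • r.left i = h := by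
  calc ∑ i ∈ r.index, Coalgebra.counit (R := k) (r.right i) • r.left i
      = TensorProduct.rid k H (∑ i ∈ r.index,
          r.left i ⊗ₜ[k] Coalgebra.counit (R := k) (r.right i)) := by
        rw [map_sum]; simp [TensorProduct.rid_tmul]
    _ = TensorProduct.rid k H (h ⊗ₜ[k] (1 : k)) := by rw [Coalgebra.sum_tmul_counit_eq r]
    _ = h := by simp

theorem conv_convOne (f : H →ₗ[k] M) : conv f (convOne k H M) = f := by
  ext h
  rw [conv_repr f _ (Coalgebra.Repr.arbitrary k h)]
  simp only [convOne_apply, Algebra.algebraMap_eq_smul_one, mul_smul_comm, mul_one]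
  simp only [← map_smul, ← map_sum]
  exact congrArg f (smul_counit_sum _)

theorem convOne_conv (f : H →ₗ[k] M) : conv (convOne k H M) f = f := by
  ext h
  rw [conv_repr _ f (Coalgebra.Repr.arbitrary k h)]
  simp only [convOne_apply, Algebra.algebraMap_eq_smul_one, smul_mul_assoc, one_mul]
  simp only [← map_smul, ← map_sum]
  exact congrArg f (counit_smul_sum _)

theorem conv_assoc (f g e : H →ₗ[k] M) : conv (conv f g) e = conv f (conv g e) := by
  ext h
  set r := Coalgebra.Repr.arbitrary k h
  have key := Coalgebra.sum_tmul_tmul_eq (R := k) r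
    (fun i => Coalgebra.Repr.arbitrary k (r.left i))
    (fun i => Coalgebra.Repr.arbitrary k (r.right i))
  apply_fun (LinearMap.mul' k M ∘ₗ TensorProduct.map f
    (LinearMap.mul' k M ∘ₗ TensorProduct.map g e)) at key
  simp only [map_sum, LinearMap.comp_apply, TensorProduct.map_tmul,
    LinearMap.mul'_apply] at key
  rw [conv_repr (conv f g) e r, conv_repr f (conv g e) r]
  calc ∑ i ∈ r.index, conv f g (r.left i) * e (r.right i)
      = ∑ i ∈ r.index, ∑ p ∈ (Coalgebra.Repr.arbitrary k (r.left i)).index,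
          f ((Coalgebra.Repr.arbitrary k (r.left i)).left p) *
          ((g ((Coalgebra.Repr.arbitrary k (r.left i)).right p)) * e (r.right i)) := by
        refine Finset.sum_congr rfl fun i _ => ?_
        rw [conv_repr f g (Coalgebra.Repr.arbitrary k (r.left i)), Finset.sum_mul]
        simp [mul_assoc]
    _ = ∑ i ∈ r.index, f (r.left i) * conv g e (r.right i) := by
        rw [key]
        refine Finset.sum_congr rfl fun i _ => ?_
        rw [conv_repr g e (Coalgebra.Repr.arbitrary k (r.right i)), Finset.mul_sum]

end aux

noncomputable def Xmap (k : Type*) {H A : Type*} [CommRing k] [Ring H] [HopfAlgebra k H]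
    [Ring A] [Algebra k A] (jt : H →ₗ[k] A) : H →ₗ[k] A ⊗[k] H :=
  TensorProduct.map jt (HopfAlgebra.antipode k) ∘ₗ (TensorProduct.comm k H H).toLinearMap ∘ₗ
    Coalgebra.comul

theorem Xmap_repr {k H A : Type*} [CommRing k] [Ring H] [HopfAlgebra k H] [Ring A] [Algebra k A]
    (jt : H →ₗ[k] A) {h : H} {ι : Type*} (r : Coalgebra.Repr k h ι) :
    Xmap k jt h = ∑ i ∈ r.index,
      jt (r.right i) ⊗ₜ[k] HopfAlgebra.antipode k (r.left i) := by
  simp only [Xmap, LinearMap.comp_apply, LinearEquiv.coe_coe, ← r.eq, map_sum,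
    TensorProduct.comm_tmul, TensorProduct.map_tmul]

section main
variable {k H A : Type*} [CommRing k] [Ring H] [HopfAlgebra k H] [Ring A] [Algebra k A]

theorem key_left_inv (j jt : H →ₗ[k] A) (F : H →ₗ[k] A ⊗[k] H)
    (hF : ∀ h : H, F h = TensorProduct.map j LinearMap.id (Coalgebra.comul (R := k) h))
    (hj2 : conv jt j = convOne k H A) :
    conv (Xmap k jt) F = convOne k H (A ⊗[k] H) := by
  ext h
  set r := Coalgebra.Repr.arbitrary k h with hrdef
  set rl : (i : H × H) → Coalgebra.Repr k (r.left i) (H × H) :=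
    fun i => Coalgebra.Repr.arbitrary k (r.left i) with hrl
  set rr : (i : H × H) → Coalgebra.Repr k (r.right i) (H × H) :=
    fun i => Coalgebra.Repr.arbitrary k (r.right i) with hrr
  -- Step 0: top-level expansion
  rw [conv_repr _ _ r]
  -- Step 1: coassociativity at the top level
  have key1 := Coalgebra.sum_tmul_tmul_eq (R := k) r rl rr
  apply_fun (LinearMap.mul' k (A ⊗[k] H) ∘ₗ
      TensorProduct.map (TensorProduct.map jt (HopfAlgebra.antipode k) ∘ₗ
        (TensorProduct.comm k H H).toLinearMap) F ∘ₗ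
      (TensorProduct.assoc k H H H).symm.toLinearMap) at key1
  simp only [map_sum, LinearMap.comp_apply, LinearEquiv.coe_coe,
    TensorProduct.assoc_symm_tmul, TensorProduct.map_tmul, TensorProduct.comm_tmul,
    LinearMap.mul'_apply] at key1
  have step1 : ∑ i ∈ r.index, Xmap k jt (r.left i) * F (r.right i)
      = ∑ i ∈ r.index, ∑ q ∈ (rr i).index,
          (jt ((rr i).left q) ⊗ₜ[k] HopfAlgebra.antipode k (r.left i)) *
            F ((rr i).right q) := by
    rw [← key1]
    refine Finset.sum_congr rfl fun i _ => ?_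
    rw [Xmap_repr jt (rl i), Finset.sum_mul]
  rw [step1]
  -- Step 2: per-i inner computation
  have step2 : ∀ i ∈ r.index, ∑ q ∈ (rr i).index,
      (jt ((rr i).left q) ⊗ₜ[k] HopfAlgebra.antipode k (r.left i)) *
        F ((rr i).right q)
      = (1 : A) ⊗ₜ[k] (HopfAlgebra.antipode k (r.left i) * r.right i) := by
    intro i _
    set x := HopfAlgebra.antipode k (r.left i) with hx
    set rrl : (q : H × H) → Coalgebra.Repr k ((rr i).left q) (H × H) :=
      fun q => Coalgebra.Repr.arbitrary k ((rr i).left q) with hrrl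
    set rrr : (q : H × H) → Coalgebra.Repr k ((rr i).right q) (H × H) :=
      fun q => Coalgebra.Repr.arbitrary k ((rr i).right q) with hrrr
    have key2 := Coalgebra.sum_tmul_tmul_eq (R := k) (rr i) rrl rrr
    apply_fun (LinearMap.mul' k (A ⊗[k] H) ∘ₗ
        TensorProduct.map (((TensorProduct.mk k A H).flip x) ∘ₗ jt)
          (TensorProduct.map j LinearMap.id)) at key2
    simp only [map_sum, LinearMap.comp_apply, TensorProduct.map_tmul,
      TensorProduct.mk_apply, LinearMap.flip_apply, LinearMap.id_coe, id_eq,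
      LinearMap.mul'_apply, Algebra.TensorProduct.tmul_mul_tmul] at key2
    -- key2 : ∑ q ∑ m (jt s₁ * j s₂) ⊗ (x * t) = ∑ q ∑ n (jt s * j t₁) ⊗ (x * t₂)
    calc ∑ q ∈ (rr i).index, (jt ((rr i).left q) ⊗ₜ[k] x) * F ((rr i).right q)
        = ∑ q ∈ (rr i).index, ∑ n ∈ (rrr q).index,
            (jt ((rr i).left q) * j ((rrr q).left n)) ⊗ₜ[k] (x * (rrr q).right n) := by
          refine Finset.sum_congr rfl fun q _ => ?_
          rw [hF, ← (rrr q).eq, map_sum, Finset.mul_sum]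
          simp [Algebra.TensorProduct.tmul_mul_tmul]
      _ = ∑ q ∈ (rr i).index, ∑ m ∈ (rrl q).index,
            (jt ((rrl q).left m) * j ((rrl q).right m)) ⊗ₜ[k] (x * (rr i).right q) := by
          rw [key2]
      _ = ∑ q ∈ (rr i).index,
            (conv jt j ((rr i).left q)) ⊗ₜ[k] (x * (rr i).right q) := by
          refine Finset.sum_congr rfl fun q _ => ?_
          rw [conv_repr jt j (rrl q), TensorProduct.sum_tmul]
      _ = ∑ q ∈ (rr i).index,
            Coalgebra.counit (R := k) ((rr i).left q) •
              ((1 : A) ⊗ₜ[k] (x * (rr i).right q)) := by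
          refine Finset.sum_congr rfl fun q _ => ?_
          rw [hj2, convOne_apply, Algebra.algebraMap_eq_smul_one, TensorProduct.smul_tmul']
      _ = (1 : A) ⊗ₜ[k] (x * r.right i) := by
          simp only [← TensorProduct.tmul_smul, ← TensorProduct.tmul_sum]
          congr 1
          calc ∑ q ∈ (rr i).index,
                  Coalgebra.counit (R := k) ((rr i).left q) • (x * (rr i).right q)
              = x * ∑ q ∈ (rr i).index,
                  Coalgebra.counit (R := k) ((rr i).left q) • (rr i).right q := by
                rw [Finset.mul_sum]; simp [mul_smul_comm]
            _ = x * r.right i := by rw [counit_smul_sum (rr i)]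
  rw [Finset.sum_congr rfl step2, ← TensorProduct.tmul_sum,
    HopfAlgebra.sum_antipode_mul_eq_algebraMap_counit r, convOne_apply]
  simp [Algebra.TensorProduct.algebraMap_apply, Algebra.algebraMap_eq_smul_one, Algebra.TensorProduct.one_def,
    TensorProduct.tmul_smul, TensorProduct.smul_tmul']

end main

section main2
variable {k H A : Type*} [CommRing k] [Ring H] [HopfAlgebra k H] [Ring A] [Algebra k A]

theorem rho_conv (c : ComodAlg k H A) (f g : H →ₗ[k] A) :
    c.ρ ∘ₗ conv f g = conv (c.ρ ∘ₗ f) (c.ρ ∘ₗ g) := by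
  ext h
  set r := Coalgebra.Repr.arbitrary k h
  rw [LinearMap.comp_apply, conv_repr f g r, conv_repr (c.ρ ∘ₗ f) (c.ρ ∘ₗ g) r, map_sum]
  exact Finset.sum_congr rfl fun i _ => c.map_mul _ _

theorem rho_convOne (c : ComodAlg k H A) :
    c.ρ ∘ₗ convOne k H A = convOne k H (A ⊗[k] H) := by
  ext h
  simp only [LinearMap.comp_apply, convOne_apply, Algebra.algebraMap_eq_smul_one,
    map_smul, c.map_one]

theorem rho_jt (c : ComodAlg k H A) (j jt : H →ₗ[k] A)
    (hcolin : ∀ h : H, c.ρ (j h) =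
      TensorProduct.map j LinearMap.id (Coalgebra.comul (R := k) h))
    (hj1 : conv j jt = convOne k H A) (hj2 : conv jt j = convOne k H A) :
    c.ρ ∘ₗ jt = Xmap k jt := by
  have h2 := key_left_inv j jt (c.ρ ∘ₗ j) hcolin hj2
  have h1 : conv (c.ρ ∘ₗ j) (c.ρ ∘ₗ jt) = convOne k H (A ⊗[k] H) := by
    rw [← rho_conv c j jt, hj1, rho_convOne c]
  calc c.ρ ∘ₗ jt = conv (convOne k H (A ⊗[k] H)) (c.ρ ∘ₗ jt) := (convOne_conv _).symm
    _ = conv (conv (Xmap k jt) (c.ρ ∘ₗ j)) (c.ρ ∘ₗ jt) := by rw [h2]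
    _ = conv (Xmap k jt) (conv (c.ρ ∘ₗ j) (c.ρ ∘ₗ jt)) := conv_assoc _ _ _
    _ = conv (Xmap k jt) (convOne k H (A ⊗[k] H)) := by rw [h1]
    _ = Xmap k jt := conv_convOne _

end main2


/-- For a cleft extension `B ⊆ A` with cleaving map `j` and convolution inverse `j̃`,
the element `∑ a⁰ j̃(a¹)` is coinvariant for every `a ∈ A`. -/
theorem cleft_coinvariant
    {k H A : Type*} [CommRing k] [Ring H] [HopfAlgebra k H] [Ring A] [Algebra k A]
    (c : ComodAlg k H A) (j jt : H →ₗ[k] A)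
    -- `j` is a cleaving map with convolution inverse `jt`
    (hcolin : ∀ h : H, c.ρ (j h) =
      TensorProduct.map j LinearMap.id (Coalgebra.comul (R := k) h))
    (hj1 : conv j jt = convOne k H A) (hj2 : conv jt j = convOne k H A) :
    ∀ a : A,
      LinearMap.mul' k A (TensorProduct.map LinearMap.id jt (c.ρ a)) ∈ c.coinv := by
  intro a
  have hrj := rho_jt c j jt hcolin hj1 hj2
  -- Step A
  have stepA : c.ρ ∘ₗ LinearMap.mul' k A ∘ₗ TensorProduct.map LinearMap.id jt =
      LinearMap.mul' k (A ⊗[k] H) ∘ₗ TensorProduct.map LinearMap.id (Xmap k jt) ∘ₗ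
        TensorProduct.map c.ρ LinearMap.id := by
    apply TensorProduct.ext'
    intro x h
    simp only [LinearMap.comp_apply, TensorProduct.map_tmul, LinearMap.id_coe, id_eq,
      LinearMap.mul'_apply]
    rw [c.map_mul, ← LinearMap.congr_fun hrj h, LinearMap.comp_apply]
  -- Step C
  have stepC : LinearMap.mul' k (A ⊗[k] H) ∘ₗ TensorProduct.map LinearMap.id (Xmap k jt) ∘ₗ
      (TensorProduct.assoc k A H H).symm.toLinearMap ∘ₗ
        TensorProduct.map LinearMap.id Coalgebra.comul =
      ((TensorProduct.mk k A H).flip 1) ∘ₗ LinearMap.mul' k A ∘ₗ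
        TensorProduct.map LinearMap.id jt := by
    apply TensorProduct.ext'
    intro x h
    set r := Coalgebra.Repr.arbitrary k h with hrdef
    set rl : (i : H × H) → Coalgebra.Repr k (r.left i) (H × H) :=
      fun i => Coalgebra.Repr.arbitrary k (r.left i) with hrl
    set rr : (i : H × H) → Coalgebra.Repr k (r.right i) (H × H) :=
      fun i => Coalgebra.Repr.arbitrary k (r.right i) with hrr
    have key := Coalgebra.sum_tmul_tmul_eq (R := k) r rl rr
    apply_fun (LinearMap.mul' k (A ⊗[k] H) ∘ₗ
        TensorProduct.map (TensorProduct.mk k A H x)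
          (TensorProduct.map jt (HopfAlgebra.antipode k) ∘ₗ
            (TensorProduct.comm k H H).toLinearMap)) at key
    simp only [map_sum, LinearMap.comp_apply, LinearEquiv.coe_coe, TensorProduct.map_tmul,
      TensorProduct.comm_tmul, TensorProduct.mk_apply, LinearMap.mul'_apply,
      Algebra.TensorProduct.tmul_mul_tmul] at key
    -- key : Σ_i Σ_p (x * jt (r.right i)) ⊗ (u * S v) = Σ_i Σ_q (x * jt t) ⊗ (l i * S s)
    calc (LinearMap.mul' k (A ⊗[k] H) ∘ₗ TensorProduct.map LinearMap.id (Xmap k jt) ∘ₗ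
        (TensorProduct.assoc k A H H).symm.toLinearMap ∘ₗ
          TensorProduct.map LinearMap.id Coalgebra.comul) (x ⊗ₜ[k] h)
        = ∑ i ∈ r.index, (x ⊗ₜ[k] r.left i) * Xmap k jt (r.right i) := by
          simp only [LinearMap.comp_apply, TensorProduct.map_tmul, LinearMap.id_coe, id_eq,
            ← r.eq, TensorProduct.tmul_sum, map_sum, LinearEquiv.coe_coe,
            TensorProduct.assoc_symm_tmul, LinearMap.mul'_apply]
      _ = ∑ i ∈ r.index, ∑ q ∈ (rr i).index,
            (x * jt ((rr i).right q)) ⊗ₜ[k]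
              (r.left i * HopfAlgebra.antipode k ((rr i).left q)) := by
          refine Finset.sum_congr rfl fun i _ => ?_
          rw [Xmap_repr jt (rr i), Finset.mul_sum]
          simp [Algebra.TensorProduct.tmul_mul_tmul]
      _ = ∑ i ∈ r.index, ∑ p ∈ (rl i).index,
            (x * jt (r.right i)) ⊗ₜ[k]
              ((rl i).left p * HopfAlgebra.antipode k ((rl i).right p)) := by
          rw [← key]
      _ = ∑ i ∈ r.index,
            (x * jt (r.right i)) ⊗ₜ[k] algebraMap k H (Coalgebra.counit (r.left i)) := by
          refine Finset.sum_congr rfl fun i _ => ?_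
          rw [← TensorProduct.tmul_sum, HopfAlgebra.sum_mul_antipode_eq_algebraMap_counit (rl i)]
      _ = (x * jt h) ⊗ₜ[k] (1 : H) := by
          simp only [Algebra.algebraMap_eq_smul_one, TensorProduct.tmul_smul,
            TensorProduct.smul_tmul', ← TensorProduct.sum_tmul]
          congr 1
          calc ∑ i ∈ r.index, Coalgebra.counit (R := k) (r.left i) • (x * jt (r.right i))
              = x * ∑ i ∈ r.index, Coalgebra.counit (R := k) (r.left i) • jt (r.right i) := by
                rw [Finset.mul_sum]; simp [mul_smul_comm]
            _ = x * jt h := by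
                simp only [← map_smul, ← map_sum]
                rw [counit_smul_sum r]
      _ = ((TensorProduct.mk k A H).flip 1 ∘ₗ LinearMap.mul' k A ∘ₗ
            TensorProduct.map LinearMap.id jt) (x ⊗ₜ[k] h) := by
          simp [TensorProduct.mk_apply]
  -- assemble
  show c.ρ (LinearMap.mul' k A (TensorProduct.map LinearMap.id jt (c.ρ a))) =
    LinearMap.mul' k A (TensorProduct.map LinearMap.id jt (c.ρ a)) ⊗ₜ[k] (1 : H)
  have hB : TensorProduct.map c.ρ LinearMap.id (c.ρ a) =
      (TensorProduct.assoc k A H H).symm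
        (TensorProduct.map LinearMap.id Coalgebra.comul (c.ρ a)) := by
    rw [← c.coassoc a, LinearEquiv.symm_apply_apply]
  calc c.ρ (LinearMap.mul' k A (TensorProduct.map LinearMap.id jt (c.ρ a)))
      = (c.ρ ∘ₗ LinearMap.mul' k A ∘ₗ TensorProduct.map LinearMap.id jt) (c.ρ a) := rfl
    _ = (LinearMap.mul' k (A ⊗[k] H) ∘ₗ TensorProduct.map LinearMap.id (Xmap k jt) ∘ₗ
          TensorProduct.map c.ρ LinearMap.id) (c.ρ a) := by rw [stepA]
    _ = (LinearMap.mul' k (A ⊗[k] H) ∘ₗ TensorProduct.map LinearMap.id (Xmap k jt) ∘ₗ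
          (TensorProduct.assoc k A H H).symm.toLinearMap ∘ₗ
            TensorProduct.map LinearMap.id Coalgebra.comul) (c.ρ a) := by
        simp only [LinearMap.comp_apply, LinearEquiv.coe_coe]
        rw [hB]
    _ = (((TensorProduct.mk k A H).flip 1) ∘ₗ LinearMap.mul' k A ∘ₗ
          TensorProduct.map LinearMap.id jt) (c.ρ a) := by rw [stepC]
    _ = LinearMap.mul' k A (TensorProduct.map LinearMap.id jt (c.ρ a)) ⊗ₜ[k] (1 : H) := rfl
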